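/- Let T be a complete local Noetherian ring with maximal ideal M, let C be a countable set of prime ideals of T none of which equals M, and let D be a countable set of elements of T. If I is an ideal of T not contained in any single member of C, then I is not contained in the union of the cosets P + r over all P in C and r in D. -/

import Mathlib

/-- Krull intersection: an ideal is closed in the maximal-adic topology. -/
lemma krull_closed_aux {T : Type*} [CommRing T] [IsNoetherianRing T] [IsLocalRing T]
    (J : Ideal T) (y : T)
    (hy : ∀ k : ℕ, y ∈ J ⊔ IsLocalRing.maximalIdeal T ^ k) : y ∈ J := by
  have hbot : (⨅ i : ℕ, (IsLocalRing.maximalIdeal T) ^ i • ⊤ : Submodule T (T ⧸ J)) = ⊥ :=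
    Ideal.iInf_pow_smul_eq_bot_of_isLocalRing _
      (Ideal.IsMaximal.ne_top (IsLocalRing.maximalIdeal.isMaximal T))
  have hmem : Ideal.Quotient.mk J y ∈ (⊥ : Submodule T (T ⧸ J)) := by
    rw [← hbot]
    refine Submodule.mem_iInf _ |>.mpr fun k => ?_
    obtain ⟨a, ha, b, hb, hab⟩ := Submodule.mem_sup.mp (hy k)
    have h1 : Ideal.Quotient.mk J y = b • (1 : T ⧸ J) := by
      rw [← hab, map_add, Ideal.Quotient.eq_zero_iff_mem.mpr ha, zero_add,
        ← Ideal.Quotient.algebraMap_eq, Algebra.algebraMap_eq_smul_one]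
    rw [h1]
    exact Submodule.smul_mem_smul hb Submodule.mem_top
  exact Ideal.Quotient.eq_zero_iff_mem.mp (by simpa using hmem)

/-- Heitmann, Lemma 2 / countable prime avoidance. -/
theorem statement_0 (T : Type*) [CommRing T] [IsNoetherianRing T] [IsLocalRing T]
    [IsAdicComplete (IsLocalRing.maximalIdeal T) T]
    (C : Set (Ideal T)) (hCcount : C.Countable)
    (hCprime : ∀ P ∈ C, P.IsPrime)
    (hCnotmax : ∀ P ∈ C, P ≠ IsLocalRing.maximalIdeal T)
    (D : Set T) (hDcount : D.Countable)
    (I : Ideal T) (hI : ∀ P ∈ C, ¬ I ≤ P) :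
    ¬ (I : Set T) ⊆ ⋃ P ∈ C, ⋃ r ∈ D, (fun p => p + r) '' (P : Set T) := by
  intro h
  set M : Ideal T := IsLocalRing.maximalIdeal T with hMdef
  -- the union is nonempty since 0 ∈ I, hence C ×ˢ D is nonempty
  have h0 := h I.zero_mem
  simp only [Set.mem_iUnion, Set.mem_image] at h0
  obtain ⟨P₀, hP₀, r₀, hr₀, -⟩ := h0
  have hne : (C ×ˢ D).Nonempty := ⟨(P₀, r₀), Set.mem_prod.mpr ⟨hP₀, hr₀⟩⟩
  obtain ⟨f, hf⟩ := (hCcount.prod hDcount).exists_eq_range hne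
  set P : ℕ → Ideal T := fun n => (f n).1 with hPdef
  set r : ℕ → T := fun n => (f n).2 with hrdef
  have hfn : ∀ n, P n ∈ C ∧ r n ∈ D := by
    intro n
    have : f n ∈ C ×ˢ D := by rw [hf]; exact Set.mem_range_self n
    exact Set.mem_prod.mp this
  -- the key inductive step
  have hstep : ∀ (x : T) (c n : ℕ), x ∈ I →
      ∃ z : T, ∃ c' : ℕ, z ∈ I ∧ z - x ∈ M ^ c ∧ c < c' ∧ z - r n ∉ (P n ⊔ M ^ c') := by
    intro x c n hx
    have hP : (P n).IsPrime := hCprime _ (hfn n).1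
    have hnm : P n ≠ M := hCnotmax _ (hfn n).1
    have hIP : ¬ I ≤ P n := hI _ (hfn n).1
    have hno : ¬ (M ^ c * I ≤ P n) := by
      intro hle
      rcases hP.mul_le.mp hle with h1 | h1
      · rcases Nat.eq_zero_or_pos c with rfl | hc
        · rw [pow_zero, Ideal.one_eq_top] at h1
          exact hP.ne_top (top_le_iff.mp h1)
        · have hMle : M ≤ P n := (Ideal.IsPrime.pow_le_iff hc.ne').mp h1
          exact hnm ((IsLocalRing.maximalIdeal.isMaximal T).eq_of_le hP.ne_top hMle).symm
      · exact hIP h1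
    obtain ⟨δ, hδmem, hδP⟩ := SetLike.not_le_iff_exists.mp hno
    have hδI : δ ∈ I := Ideal.mul_le_right hδmem
    have hδM : δ ∈ M ^ c := Ideal.mul_le_left hδmem
    -- find z ∈ I near x with z - r n ∉ P n
    obtain ⟨z, hzI, hzx, hzP⟩ : ∃ z, z ∈ I ∧ z - x ∈ M ^ c ∧ z - r n ∉ P n := by
      by_cases hxP : x - r n ∈ P n
      · refine ⟨x + δ, I.add_mem hx hδI, by simpa using hδM, fun hcon => hδP ?_⟩
        have : (x + δ - r n) - (x - r n) ∈ P n := (P n).sub_mem hcon hxP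
        simpa using this
      · exact ⟨x, hx, by simp, hxP⟩
    -- find a suitable exponent by Krull's intersection theorem
    have : ¬ ∀ k : ℕ, z - r n ∈ P n ⊔ M ^ k := fun hk => hzP (krull_closed_aux _ _ hk)
    push_neg at this
    obtain ⟨k, hk⟩ := this
    refine ⟨z, max k (c + 1), hzI, hzx, lt_of_lt_of_le (Nat.lt_succ_self c) (le_max_right _ _),
      fun hcon => hk ?_⟩
    exact (sup_le_sup_left (Ideal.pow_le_pow_right (le_max_left _ _)) (P n)) hcon
  choose! Z CC h1 h2 h3 h4 using hstep
  -- construct the sequence by recursion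
  set F : ℕ → T × ℕ := fun n =>
    Nat.rec ((0 : T), 1) (fun n p => (Z p.1 p.2 n, CC p.1 p.2 n)) n with hF
  set x : ℕ → T := fun n => (F n).1 with hxdef
  set c : ℕ → ℕ := fun n => (F n).2 with hcdef
  have hxs : ∀ n, x (n + 1) = Z (x n) (c n) n := fun n => rfl
  have hcs : ∀ n, c (n + 1) = CC (x n) (c n) n := fun n => rfl
  have hxI : ∀ n, x n ∈ I := by
    intro n
    induction n with
    | zero => exact I.zero_mem
    | succ n ih => rw [hxs]; exact h1 _ _ _ ih
  have hstep2 : ∀ n, x (n + 1) - x n ∈ M ^ c n := fun n => by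
    rw [hxs]; exact h2 _ _ _ (hxI n)
  have hclt : ∀ n, c n < c (n + 1) := fun n => by
    rw [hcs]; exact h3 _ _ _ (hxI n)
  have havoid : ∀ n, x (n + 1) - r n ∉ (P n ⊔ M ^ c (n + 1)) := fun n => by
    rw [hxs, hcs]; exact h4 _ _ _ (hxI n)
  have hcmono : ∀ a b, a ≤ b → c a ≤ c b := fun a b hab => by
    induction b, hab using Nat.le_induction with
    | base => exact le_rfl
    | succ b hb ih => exact ih.trans (hclt b).le
  have hcge : ∀ n, n < c n := by
    intro n
    induction n with
    | zero => exact Nat.lt_of_lt_of_le Nat.zero_lt_one le_rfl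
    | succ n ih => exact Nat.lt_of_le_of_lt (Nat.succ_le_of_lt ih) (hclt n)
  have hdiff : ∀ a b, a ≤ b → x b - x a ∈ M ^ c a := by
    intro a b hab
    induction b, hab using Nat.le_induction with
    | base => simp
    | succ b hb ih =>
      have : x (b + 1) - x a = (x (b + 1) - x b) + (x b - x a) := by ring
      rw [this]
      exact (M ^ c a).add_mem (Ideal.pow_le_pow_right (hcmono a b hb) (hstep2 b)) ih
  -- the sequence is Cauchy; get a limit L
  have hsm : ∀ (k : ℕ), (M ^ k • ⊤ : Submodule T T) = (M ^ k : Ideal T) := fun k => by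
    rw [smul_eq_mul, Ideal.mul_top]
  have hcauchy : ∀ {m n : ℕ}, m ≤ n →
      x m ≡ x n [SMOD (M ^ m • ⊤ : Submodule T T)] := by
    intro m n hmn
    rw [SModEq.sub_mem, hsm]
    have : x m - x n = -(x n - x m) := by ring
    rw [this]
    exact (M ^ m).neg_mem (Ideal.pow_le_pow_right (hcge m).le (hdiff m n hmn))
  obtain ⟨L, hL⟩ := IsPrecomplete.prec (IsAdicComplete.toIsPrecomplete (I := M)) @hcauchy
  have hL' : ∀ n, x n - L ∈ M ^ n := fun n => by
    have := (SModEq.sub_mem).mp (hL n); rwa [hsm] at this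
  -- L ∈ I since I is closed
  have hLI : L ∈ I := by
    refine krull_closed_aux I L fun k => ?_
    have heq : L = x k + (L - x k) := by ring
    have hmk : L - x k ∈ M ^ k := by
      have : L - x k = -(x k - L) := by ring
      rw [this]; exact (M ^ k).neg_mem (hL' k)
    rw [heq]
    exact Submodule.add_mem _ (Ideal.mem_sup_left (hxI k)) (Ideal.mem_sup_right hmk)
  -- L is in one of the cosets
  have hLU := h hLI
  simp only [Set.mem_iUnion, Set.mem_image] at hLU
  obtain ⟨Q, hQ, s, hs, p, hp, hps⟩ := hLU
  obtain ⟨m, hm⟩ : ∃ m, f m = (Q, s) := by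
    have : (Q, s) ∈ Set.range f := by rw [← hf]; exact Set.mem_prod.mpr ⟨hQ, hs⟩
    exact this
  have hPm : P m = Q := by rw [hPdef]; simp [hm]
  have hrm : r m = s := by rw [hrdef]; simp [hm]
  have hLmem : L - r m ∈ P m := by
    rw [hPm, hrm]
    have : L - s = p := by rw [← hps]; ring
    rw [this]; exact hp
  -- contradiction with the avoidance property at step m
  refine havoid m ?_
  set k := max (m + 1) (c (m + 1)) with hk
  have e1 : x k - x (m + 1) ∈ M ^ c (m + 1) := hdiff (m + 1) k (le_max_left _ _)
  have e2 : x k - L ∈ M ^ c (m + 1) :=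
    Ideal.pow_le_pow_right (le_max_right _ _) (hL' k)
  have heq : x (m + 1) - r m = (L - r m) + (x k - L) - (x k - x (m + 1)) := by ring
  rw [heq]
  exact Submodule.sub_mem _
    (Submodule.add_mem _ (Ideal.mem_sup_left hLmem) (Ideal.mem_sup_right e2))
    (Ideal.mem_sup_right e1)
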